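/- Let U ⊆ ℝ² be open, f : U → ℝ³ continuously differentiable, ℓ : ℝ² → ℝ a linear form and c ∈ ℝ, with ϖ(p) = ℓ(p) + c, N ≥ 1 an integer, and γ : U × ℝ → ℝ³ a C¹ map satisfying γ(p, s+1) = γ(p, s) for all (p,s). Let γ̄(p) = ∫₀¹ γ(p,s) ds and F(p) = f(p) + (1/N)·∫₀^{Nϖ(p)} (γ(p,s) − γ̄(p)) ds. Then F is differentiable at every p ∈ U with DF(p) = Df(p) + (γ(p, Nϖ(p)) − γ̄(p)) ⊗ ℓ + (1/N)·∫₀^{Nϖ(p)} (∂_p γ(p,s) − Dγ̄(p)) ds, where (X ⊗ ℓ)(v) = ℓ(v)·X and ∂_p γ denotes the differential of γ in its first variable. Consequently, defining the target differential L(p) = Df(p) + (γ(p, Nϖ(p)) − γ̄(p)) ⊗ ℓ, one has ‖DF(p) − L(p)‖ ≤ (1/N)·∫₀¹ ‖∂_p γ(p,s) − Dγ̄(p)‖ ds for every p ∈ U. -/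

import Mathlib

noncomputable section

abbrev E2 := EuclideanSpace ℝ (Fin 2)
abbrev E3 := EuclideanSpace ℝ (Fin 3)

open MeasureTheory Metric Set intervalIntegral

section helpers

lemma slice_cont {W : Type*} [NormedAddCommGroup W] [NormedSpace ℝ W]
    {φ : E2 → ℝ → W} {U : Set E2}
    (hφc : ContinuousOn (fun q : E2 × ℝ => φ q.1 q.2) (U ×ˢ (univ : Set ℝ)))
    {x : E2} (hx : x ∈ U) : Continuous (fun s => φ x s) := by
  rw [← continuousOn_univ]
  exact hφc.comp ((continuous_const.prodMk continuous_id).continuousOn)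
    (fun s _ => ⟨hx, mem_univ s⟩)

lemma param_deriv {φ : E2 → ℝ → E3} {A : E2 → ℝ → (E2 →L[ℝ] E3)} {U : Set E2}
    (hU : IsOpen U)
    (hφc : ContinuousOn (fun q : E2 × ℝ => φ q.1 q.2) (U ×ˢ (univ : Set ℝ)))
    (hA : ∀ p ∈ U, ∀ s, HasFDerivAt (fun q => φ q s) (A p s) p)
    (hAc : ContinuousOn (fun q : E2 × ℝ => A q.1 q.2) (U ×ˢ (univ : Set ℝ)))
    {p₀ : E2} (hp₀ : p₀ ∈ U) (a b : ℝ) :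
    HasFDerivAt (fun p => ∫ s in a..b, φ p s) (∫ s in a..b, A p₀ s) p₀ := by
  obtain ⟨r, hr, hball⟩ := Metric.isOpen_iff.mp hU p₀ hp₀
  set ε := r / 2 with hε
  have hε_pos : 0 < ε := by positivity
  have hcb : closedBall p₀ ε ⊆ U := fun x hx => by
    have : dist x p₀ ≤ r / 2 := hx
    exact hball (mem_ball.mpr (by simpa using lt_of_le_of_lt this (by linarith)))
  have hK : IsCompact ((closedBall p₀ ε) ×ˢ (uIcc a b)) :=
    (isCompact_closedBall _ _).prod isCompact_uIcc
  obtain ⟨C, hC⟩ := hK.exists_bound_of_continuousOn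
    (hAc.mono (prod_mono hcb (subset_univ _)))
  refine intervalIntegral.hasFDerivAt_integral_of_dominated_of_fderiv_le
    (bound := fun _ => C) (ball_mem_nhds p₀ hε_pos) ?_ ?_ ?_ ?_ ?_ ?_
  · filter_upwards [ball_mem_nhds p₀ hε_pos] with x hx
    exact (slice_cont hφc (hcb (ball_subset_closedBall hx))).aestronglyMeasurable
  · exact (slice_cont hφc hp₀).intervalIntegrable a b
  · exact (slice_cont hAc hp₀).aestronglyMeasurable
  · filter_upwards with t ht x hx
    exact hC (x, t) ⟨ball_subset_closedBall hx, uIoc_subset_uIcc ht⟩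
  · exact intervalIntegrable_const
  · filter_upwards with t ht x hx
    exact hA x (hcb (ball_subset_closedBall hx)) t

lemma periodic_zero_avg_bound {W : Type*} [NormedAddCommGroup W] [NormedSpace ℝ W]
    {g : ℝ → W} (hg : Continuous g)
    (hper : Function.Periodic g 1) (havg : (∫ s in (0:ℝ)..1, g s) = 0) (T : ℝ) :
    ‖∫ s in (0:ℝ)..T, g s‖ ≤ ∫ s in (0:ℝ)..1, ‖g s‖ := by
  set P : ℝ → W := fun t => ∫ s in (0:ℝ)..t, g s with hP
  have hPper : Function.Periodic P 1 := by
    intro t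
    have h1 : (∫ s in (0:ℝ)..t, g s) + (∫ s in t..(t+1), g s) = ∫ s in (0:ℝ)..(t+1), g s :=
      integral_add_adjacent_intervals (hg.intervalIntegrable 0 t) (hg.intervalIntegrable t (t+1))
    have h2 : (∫ s in t..(t+1), g s) = ∫ s in (0:ℝ)..(0+1:ℝ), g s :=
      hper.intervalIntegral_add_eq t 0
    simp only [zero_add] at h2
    simp only [hP]
    rw [← h1, h2, havg, add_zero]
  have hfr : P T = P (Int.fract T) := by
    have := hPper.sub_int_mul_eq (x := T) ⌊T⌋
    rw [mul_one] at this
    rw [Int.fract, this]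
  have h0 : (0:ℝ) ≤ Int.fract T := Int.fract_nonneg T
  have h1 : Int.fract T ≤ 1 := (Int.fract_lt_one T).le
  calc ‖P T‖ = ‖P (Int.fract T)‖ := by rw [hfr]
    _ ≤ ∫ s in (0:ℝ)..(Int.fract T), ‖g s‖ := norm_integral_le_integral_norm h0
    _ ≤ ∫ s in (0:ℝ)..1, ‖g s‖ := by
        refine integral_mono_interval le_rfl h0 h1 ?_ ((hg.norm).intervalIntegrable 0 1)
        filter_upwards with s using norm_nonneg _

end helpers

set_option maxHeartbeats 2000000 in
/-- Differential of the corrugation process and `C¹` estimate against the target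
differential `L(p) = Df(p) + (γ(p, Nϖ(p)) − γ̄(p)) ⊗ ℓ`. -/
theorem stmt7 (U : Set E2) (hU : IsOpen U)
    (f : E2 → E3) (hf : ContDiffOn ℝ 1 f U)
    (ℓ : E2 →L[ℝ] ℝ) (c : ℝ) (ϖ : E2 → ℝ) (hϖ : ∀ p : E2, ϖ p = ℓ p + c)
    (N : ℕ) (hN : 1 ≤ N)
    (γ : E2 → ℝ → E3)
    (hγ : ContDiffOn ℝ 1 (fun q : E2 × ℝ => γ q.1 q.2) (U ×ˢ (Set.univ : Set ℝ)))
    (hper : ∀ (p : E2) (s : ℝ), γ p (s + 1) = γ p s)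
    (γbar : E2 → E3) (hγbar : ∀ p : E2, γbar p = ∫ s in (0:ℝ)..1, γ p s)
    (F : E2 → E3)
    (hF : ∀ p : E2,
      F p = f p + (N : ℝ)⁻¹ • ∫ s in (0:ℝ)..((N : ℝ) * ϖ p), (γ p s - γbar p)) :
    ∀ p ∈ U,
      HasFDerivAt F
        (fderiv ℝ f p + ℓ.smulRight (γ p ((N : ℝ) * ϖ p) - γbar p)
          + (N : ℝ)⁻¹ • ∫ s in (0:ℝ)..((N : ℝ) * ϖ p),
              (fderiv ℝ (fun q => γ q s) p - fderiv ℝ γbar p)) p ∧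
      ‖fderiv ℝ F p - (fderiv ℝ f p + ℓ.smulRight (γ p ((N : ℝ) * ϖ p) - γbar p))‖
        ≤ (N : ℝ)⁻¹ * ∫ s in (0:ℝ)..1, ‖fderiv ℝ (fun q => γ q s) p - fderiv ℝ γbar p‖ := by
  intro p₀ hp₀
  have hNR : (0:ℝ) < (N:ℝ) := by exact_mod_cast Nat.lt_of_lt_of_le Nat.zero_lt_one hN
  set Γ : E2 × ℝ → E3 := fun q => γ q.1 q.2 with hΓ
  have hV : IsOpen (U ×ˢ (univ : Set ℝ)) := hU.prod isOpen_univ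
  have hΓd : ∀ q ∈ U ×ˢ (univ : Set ℝ), HasFDerivAt Γ (fderiv ℝ Γ q) q := fun q hq =>
    (((hγ.differentiableOn one_ne_zero) q hq).differentiableAt (hV.mem_nhds hq)).hasFDerivAt
  set A : E2 → ℝ → (E2 →L[ℝ] E3) :=
    fun p s => (fderiv ℝ Γ (p, s)).comp ((ContinuousLinearMap.id ℝ E2).prod 0) with hAdef
  have hA : ∀ p ∈ U, ∀ s : ℝ, HasFDerivAt (fun q => γ q s) (A p s) p := by
    intro p hp s
    have h1 : HasFDerivAt (fun x : E2 => (x, s))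
        ((ContinuousLinearMap.id ℝ E2).prod 0) p :=
      (hasFDerivAt_id p).prodMk (hasFDerivAt_const s p)
    exact (hΓd (p, s) ⟨hp, mem_univ _⟩).comp p h1
  have hAc : ContinuousOn (fun q : E2 × ℝ => A q.1 q.2) (U ×ˢ (univ : Set ℝ)) :=
    (hγ.continuousOn_fderiv_of_isOpen hV le_rfl).clm_comp continuousOn_const
  have contγ : ContinuousOn Γ (U ×ˢ (univ : Set ℝ)) := hγ.continuousOn
  -- derivative of γbar
  have hγbar_d : HasFDerivAt γbar (∫ s in (0:ℝ)..1, A p₀ s) p₀ := by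
    have h := param_deriv hU contγ hA hAc hp₀ 0 1
    have : γbar = fun p => ∫ s in (0:ℝ)..1, γ p s := funext hγbar
    rw [this]; exact h
  set B : E2 →L[ℝ] E3 := fderiv ℝ γbar p₀ with hBdef
  have hB : B = ∫ s in (0:ℝ)..1, A p₀ s := hγbar_d.fderiv
  have hγbar_dB : HasFDerivAt γbar B p₀ := hB ▸ hγbar_d
  have hfd : ∀ s : ℝ, fderiv ℝ (fun q => γ q s) p₀ = A p₀ s := fun s => (hA p₀ hp₀ s).fderiv
  set a : E2 → ℝ := fun p => (N : ℝ) * ϖ p with hadef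
  set T₀ : ℝ := a p₀ with hT₀
  set X : E3 := γ p₀ T₀ - γbar p₀ with hX
  -- Step D': fixed endpoint part
  have hD' : HasFDerivAt (fun p => ∫ s in (0:ℝ)..T₀, (γ p s - γbar p))
      (∫ s in (0:ℝ)..T₀, (A p₀ s - B)) p₀ := by
    have h1 := param_deriv hU contγ hA hAc hp₀ 0 T₀
    have h2 : HasFDerivAt (fun p => T₀ • γbar p) (T₀ • B) p₀ := hγbar_dB.const_smul T₀
    have h3 := h1.sub h2
    have heq : ∀ᶠ p in nhds p₀, (∫ s in (0:ℝ)..T₀, (γ p s - γbar p))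
        = (∫ s in (0:ℝ)..T₀, γ p s) - T₀ • γbar p := by
      filter_upwards [hU.mem_nhds hp₀] with p hp
      rw [intervalIntegral.integral_sub ((slice_cont contγ hp).intervalIntegrable 0 T₀)
          intervalIntegrable_const, intervalIntegral.integral_const, sub_zero]
    have h4 := h3.congr_of_eventuallyEq heq
    have heq2 : (∫ s in (0:ℝ)..T₀, (A p₀ s - B))
        = (∫ s in (0:ℝ)..T₀, A p₀ s) - T₀ • B := by
      rw [intervalIntegral.integral_sub ((slice_cont hAc hp₀).intervalIntegrable 0 T₀)
          intervalIntegrable_const, intervalIntegral.integral_const, sub_zero]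
    rw [heq2]; exact h4
  -- Step E: moving endpoint part
  have ha_sub : ∀ p : E2, a p - T₀ = (N : ℝ) * ℓ (p - p₀) := by
    intro p
    simp only [hT₀, hadef]
    rw [hϖ p, hϖ p₀, map_sub]
    ring
  have hE : HasFDerivAt (fun p => ∫ s in T₀..(a p), (γ p s - γbar p))
      (((N : ℝ) • ℓ).smulRight X) p₀ := by
    apply HasFDerivAt.of_isLittleO
    rw [Asymptotics.isLittleO_iff]
    intro ε hε
    -- continuity data
    have hcΓ : ContinuousAt Γ (p₀, T₀) := contγ.continuousAt (hV.mem_nhds ⟨hp₀, mem_univ _⟩)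
    have hcbar : ContinuousAt γbar p₀ := hγbar_dB.continuousAt
    set c' : ℝ := ε / (2 * ((N : ℝ) * ‖ℓ‖ + 1)) with hc'
    have hc'pos : 0 < c' := by positivity
    obtain ⟨ρ₁, hρ₁pos, hρ₁⟩ := Metric.continuousAt_iff.mp hcΓ c' hc'pos
    obtain ⟨ρ₂, hρ₂pos, hρ₂⟩ := Metric.continuousAt_iff.mp hcbar c' hc'pos
    obtain ⟨r, hrpos, hball⟩ := Metric.isOpen_iff.mp hU p₀ hp₀
    set δ : ℝ := min (min (ρ₁ / ((N : ℝ) * ‖ℓ‖ + 1)) ρ₁) (min ρ₂ r) with hδ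
    have hδpos : 0 < δ := by
      refine lt_min (lt_min (by positivity) hρ₁pos) (lt_min hρ₂pos hrpos)
    filter_upwards [Metric.ball_mem_nhds p₀ hδpos] with p hp
    have hdist : dist p p₀ < δ := mem_ball.mp hp
    have hpU : p ∈ U := hball (mem_ball.mpr (lt_of_lt_of_le hdist
      (le_trans (min_le_right _ _) (min_le_right _ _))))
    have hnorm : ‖p - p₀‖ = dist p p₀ := (dist_eq_norm p p₀).symm
    have hasub := ha_sub p
    have habs : |a p - T₀| ≤ (N : ℝ) * ‖ℓ‖ * ‖p - p₀‖ := by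
      rw [hasub, abs_mul, abs_of_nonneg (le_of_lt hNR)]
      have := ℓ.le_opNorm (p - p₀)
      calc (N:ℝ) * |ℓ (p - p₀)| ≤ (N:ℝ) * (‖ℓ‖ * ‖p - p₀‖) := by
            apply mul_le_mul_of_nonneg_left _ (le_of_lt hNR)
            simpa [Real.norm_eq_abs] using this
        _ = (N : ℝ) * ‖ℓ‖ * ‖p - p₀‖ := by ring
    -- for s in the moving interval, (p, s) is ρ₁-close to (p₀, T₀)
    have hsbound : ∀ s ∈ uIoc T₀ (a p), ‖(γ p s - γbar p) - X‖ ≤ 2 * c' := by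
      intro s hs
      have hsmem : s ∈ uIcc T₀ (a p) := uIoc_subset_uIcc hs
      have hsd : |s - T₀| ≤ |a p - T₀| := by
        rw [abs_sub_le_iff]
        rcases le_total T₀ (a p) with h | h
        · rw [uIcc_of_le h] at hsmem
          constructor
          · calc s - T₀ ≤ a p - T₀ := by linarith [hsmem.2]
              _ ≤ |a p - T₀| := le_abs_self _
          · linarith [hsmem.1, abs_nonneg (a p - T₀)]
        · rw [uIcc_of_ge h] at hsmem
          constructor
          · linarith [hsmem.2, abs_nonneg (a p - T₀)]
          · calc T₀ - s ≤ T₀ - a p := by linarith [hsmem.1]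
              _ ≤ |a p - T₀| := by rw [abs_sub_comm]; exact le_abs_self _
      have hsρ : |s - T₀| < ρ₁ := by
        have h1 : ‖p - p₀‖ < ρ₁ / ((N : ℝ) * ‖ℓ‖ + 1) := by
          rw [hnorm]
          exact lt_of_lt_of_le hdist (le_trans (min_le_left _ _) (min_le_left _ _))
        have h2 : (N : ℝ) * ‖ℓ‖ * ‖p - p₀‖ < ρ₁ := by
          calc (N : ℝ) * ‖ℓ‖ * ‖p - p₀‖ ≤ ((N : ℝ) * ‖ℓ‖ + 1) * ‖p - p₀‖ := by
                apply mul_le_mul_of_nonneg_right _ (norm_nonneg _)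
                linarith
            _ < ((N : ℝ) * ‖ℓ‖ + 1) * (ρ₁ / ((N : ℝ) * ‖ℓ‖ + 1)) := by
                apply mul_lt_mul_of_pos_left h1 (by positivity)
            _ = ρ₁ := by field_simp
        exact lt_of_le_of_lt (le_trans hsd habs) h2
      have hpρ : dist p p₀ < ρ₁ :=
        lt_of_lt_of_le hdist (le_trans (min_le_left _ _) (min_le_right _ _))
      have hqdist : dist (p, s) (p₀, T₀) < ρ₁ := by
        rw [Prod.dist_eq]
        apply max_lt hpρ
        rw [Real.dist_eq]
        exact hsρ
      have hγclose : dist (Γ (p, s)) (Γ (p₀, T₀)) < c' := hρ₁ hqdist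
      have hbarclose : dist (γbar p) (γbar p₀) < c' :=
        hρ₂ (lt_of_lt_of_le hdist (le_trans (min_le_right _ _) (min_le_left _ _)))
      have : (γ p s - γbar p) - X = (γ p s - γ p₀ T₀) - (γbar p - γbar p₀) := by
        simp only [hX]; abel
      rw [this]
      calc ‖(γ p s - γ p₀ T₀) - (γbar p - γbar p₀)‖
          ≤ ‖γ p s - γ p₀ T₀‖ + ‖γbar p - γbar p₀‖ := norm_sub_le _ _
        _ ≤ c' + c' := by
            apply add_le_add
            · rw [← dist_eq_norm]; exact le_of_lt hγclose
            · rw [← dist_eq_norm]; exact le_of_lt hbarclose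
        _ = 2 * c' := by ring
    -- rewrite the little-o expression
    have hval0 : (∫ s in T₀..(a p₀), (γ p₀ s - γbar p₀)) = 0 := by
      rw [← hT₀, intervalIntegral.integral_same]
    have happ : (((N : ℝ) • ℓ).smulRight X) (p - p₀) = (a p - T₀) • X := by
      rw [ContinuousLinearMap.smulRight_apply, ContinuousLinearMap.smul_apply, hasub]
      simp [smul_smul]
    have hint1 : IntervalIntegrable (fun s => γ p s - γbar p) volume T₀ (a p) :=
      ((slice_cont contγ hpU).sub continuous_const).intervalIntegrable _ _
    have hXint : (∫ s in T₀..(a p), (X : E3)) = (a p - T₀) • X :=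
      intervalIntegral.integral_const X
    have hrw : (∫ s in T₀..(a p), (γ p s - γbar p)) - (∫ s in T₀..(a p₀), (γ p₀ s - γbar p₀))
        - (((N : ℝ) • ℓ).smulRight X) (p - p₀)
        = ∫ s in T₀..(a p), ((γ p s - γbar p) - X) := by
      rw [hval0, sub_zero, happ, ← hXint,
        ← intervalIntegral.integral_sub hint1 intervalIntegrable_const]
    rw [hrw]
    calc ‖∫ s in T₀..(a p), ((γ p s - γbar p) - X)‖
        ≤ 2 * c' * |a p - T₀| := intervalIntegral.norm_integral_le_of_norm_le_const hsbound
      _ ≤ 2 * c' * ((N : ℝ) * ‖ℓ‖ * ‖p - p₀‖) := by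
          apply mul_le_mul_of_nonneg_left habs (by positivity)
      _ ≤ ε * ‖p - p₀‖ := by
          have hM : (0:ℝ) < (N : ℝ) * ‖ℓ‖ + 1 := by positivity
          have hle : 2 * c' * ((N : ℝ) * ‖ℓ‖) ≤ ε := by
            have heq : 2 * c' * ((N : ℝ) * ‖ℓ‖)
                = ε * (((N : ℝ) * ‖ℓ‖) / ((N : ℝ) * ‖ℓ‖ + 1)) := by
              rw [hc']; field_simp
            rw [heq]
            apply mul_le_of_le_one_right hε.le
            rw [div_le_one hM]
            linarith
          calc 2 * c' * ((N : ℝ) * ‖ℓ‖ * ‖p - p₀‖)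
              = (2 * c' * ((N : ℝ) * ‖ℓ‖)) * ‖p - p₀‖ := by ring
            _ ≤ ε * ‖p - p₀‖ := mul_le_mul_of_nonneg_right hle (norm_nonneg _)
  -- assemble the derivative of the moving integral
  have hTe : ((N:ℝ) * ϖ p₀) = T₀ := rfl
  have hXe : γ p₀ ((N:ℝ) * ϖ p₀) - γbar p₀ = X := rfl
  have hG : HasFDerivAt (fun p => ∫ s in (0:ℝ)..(a p), (γ p s - γbar p))
      ((∫ s in (0:ℝ)..T₀, (A p₀ s - B)) + ((N : ℝ) • ℓ).smulRight X) p₀ := by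
    have h := hD'.add hE
    apply h.congr_of_eventuallyEq
    filter_upwards [hU.mem_nhds hp₀] with p hp
    have i1 : IntervalIntegrable (fun s => γ p s - γbar p) volume 0 T₀ :=
      ((slice_cont contγ hp).sub continuous_const).intervalIntegrable _ _
    have i2 : IntervalIntegrable (fun s => γ p s - γbar p) volume T₀ (a p) :=
      ((slice_cont contγ hp).sub continuous_const).intervalIntegrable _ _
    exact (intervalIntegral.integral_add_adjacent_intervals i1 i2).symm
  have hf' : HasFDerivAt f (fderiv ℝ f p₀) p₀ :=
    (((hf.differentiableOn one_ne_zero) p₀ hp₀).differentiableAt (hU.mem_nhds hp₀)).hasFDerivAt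
  have hFd : HasFDerivAt F (fderiv ℝ f p₀ +
      (N:ℝ)⁻¹ • ((∫ s in (0:ℝ)..T₀, (A p₀ s - B)) + ((N : ℝ) • ℓ).smulRight X)) p₀ := by
    have hFe : F = fun p => f p + (N:ℝ)⁻¹ • ∫ s in (0:ℝ)..(a p), (γ p s - γbar p) :=
      funext hF
    rw [hFe]
    exact hf'.add (hG.const_smul (N:ℝ)⁻¹)
  -- rewrite the claimed derivative
  have hint_eq : (fun s => fderiv ℝ (fun q => γ q s) p₀ - fderiv ℝ γbar p₀)
      = fun s => A p₀ s - B := funext fun s => by rw [hfd s]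
  have hsm : ((N : ℝ) • ℓ).smulRight X = (N:ℝ) • (ℓ.smulRight X) := by
    ext v
    simp [smul_smul, mul_assoc]
  have hNN : (N:ℝ)⁻¹ • ((N:ℝ) • (ℓ.smulRight X)) = ℓ.smulRight X := by
    rw [smul_smul, inv_mul_cancel₀ hNR.ne', one_smul]
  have hkey : fderiv ℝ f p₀ +
      (N:ℝ)⁻¹ • ((∫ s in (0:ℝ)..T₀, (A p₀ s - B)) + ((N : ℝ) • ℓ).smulRight X)
      = fderiv ℝ f p₀ + ℓ.smulRight (γ p₀ ((N:ℝ) * ϖ p₀) - γbar p₀)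
        + (N : ℝ)⁻¹ • ∫ s in (0:ℝ)..((N:ℝ) * ϖ p₀),
            (fderiv ℝ (fun q => γ q s) p₀ - fderiv ℝ γbar p₀) := by
    rw [hint_eq, hTe, hXe, smul_add, hsm, hNN]
    abel
  have hmain : HasFDerivAt F
      (fderiv ℝ f p₀ + ℓ.smulRight (γ p₀ ((N:ℝ) * ϖ p₀) - γbar p₀)
        + (N : ℝ)⁻¹ • ∫ s in (0:ℝ)..((N:ℝ) * ϖ p₀),
            (fderiv ℝ (fun q => γ q s) p₀ - fderiv ℝ γbar p₀)) p₀ := by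
    rw [← hkey]; exact hFd
  refine ⟨hmain, ?_⟩
  -- the estimate
  have hFderiv := hmain.fderiv
  rw [hFderiv, add_sub_cancel_left]
  have heqAB : (fun s : ℝ => fderiv ℝ (fun q => γ q s) p₀ - fderiv ℝ γbar p₀)
      = fun s => A p₀ s - B := funext fun s => by rw [hfd s]
  have hg_cont : Continuous (fun s : ℝ => fderiv ℝ (fun q => γ q s) p₀ - fderiv ℝ γbar p₀) := by
    rw [heqAB]; exact (slice_cont hAc hp₀).sub continuous_const
  have hg_per : Function.Periodic
      (fun s : ℝ => fderiv ℝ (fun q => γ q s) p₀ - fderiv ℝ γbar p₀) 1 := by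
    intro s
    have hfun : (fun q : E2 => γ q (s+1)) = fun q => γ q s := funext fun q => hper q s
    simp only [hfun]
  have havg : (∫ s in (0:ℝ)..1,
      (fderiv ℝ (fun q => γ q s) p₀ - fderiv ℝ γbar p₀)) = 0 := by
    rw [heqAB, intervalIntegral.integral_sub ((slice_cont hAc hp₀).intervalIntegrable 0 1)
      intervalIntegrable_const, intervalIntegral.integral_const, ← hB]
    simp
  have hbound := periodic_zero_avg_bound hg_cont hg_per havg ((N:ℝ) * ϖ p₀)
  have hnn : ‖(N:ℝ)⁻¹‖ = (N:ℝ)⁻¹ := by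
    rw [Real.norm_eq_abs, abs_of_pos (inv_pos.mpr hNR)]
  calc ‖(N:ℝ)⁻¹ • ∫ s in (0:ℝ)..((N:ℝ) * ϖ p₀),
        (fderiv ℝ (fun q => γ q s) p₀ - fderiv ℝ γbar p₀)‖
      ≤ ‖(N:ℝ)⁻¹‖ * ‖∫ s in (0:ℝ)..((N:ℝ) * ϖ p₀),
        (fderiv ℝ (fun q => γ q s) p₀ - fderiv ℝ γbar p₀)‖ := ContinuousLinearMap.opNorm_smul_le _ _
    _ = (N:ℝ)⁻¹ * ‖∫ s in (0:ℝ)..((N:ℝ) * ϖ p₀),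
        (fderiv ℝ (fun q => γ q s) p₀ - fderiv ℝ γbar p₀)‖ := by rw [hnn]
    _ ≤ (N:ℝ)⁻¹ * ∫ s in (0:ℝ)..1,
        ‖fderiv ℝ (fun q => γ q s) p₀ - fderiv ℝ γbar p₀‖ :=
      mul_le_mul_of_nonneg_left hbound (inv_nonneg.mpr hNR.le)
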